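/- Let A, B ⊆ R^d be closed convex cones and T_DR the Douglas–Rachford operator for (A,B). The kernel {x : T_DR(x) = 0} equals the cone generated by the union of (−B) ∩ A° and B° ∩ A, i.e., it equals the set of sums u + v with u ∈ (−B) ∩ A° and v ∈ B° ∩ A. -/

import Mathlib

section Helpers

open scoped RealInnerProductSpace

variable {d : ℕ}

/-- Variational characterization of the nearest-point map. -/
lemma proj_var {C : Set (EuclideanSpace ℝ (Fin d))} (hC : Convex ℝ C)
    {x p : EuclideanSpace ℝ (Fin d)} (hp : p ∈ C)
    (hmin : ∀ w ∈ C, ‖x - p‖ ≤ ‖x - w‖) :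
    ∀ w ∈ C, ⟪x - p, w - p⟫ ≤ 0 := by
  have : Nonempty C := ⟨⟨p, hp⟩⟩
  have heq : ‖x - p‖ = ⨅ w : C, ‖x - w‖ := by
    refine le_antisymm (le_ciInf fun w => hmin w w.2) ?_
    have hbdd : BddBelow (Set.range fun w : C => ‖x - w‖) :=
      ⟨0, by rintro _ ⟨w, rfl⟩; exact norm_nonneg _⟩
    exact ciInf_le hbdd (⟨p, hp⟩ : C)
  exact (norm_eq_iInf_iff_real_inner_le_zero hC hp).1 heq

/-- Uniqueness: a point satisfying the variational inequality is the projection. -/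
lemma proj_eq {C : Set (EuclideanSpace ℝ (Fin d))} (hC : Convex ℝ C)
    {P : EuclideanSpace ℝ (Fin d) → EuclideanSpace ℝ (Fin d)}
    (hP : ∀ x, P x ∈ C ∧ ∀ w ∈ C, ‖x - P x‖ ≤ ‖x - w‖)
    {x p : EuclideanSpace ℝ (Fin d)} (hp : p ∈ C)
    (hvar : ∀ w ∈ C, ⟪x - p, w - p⟫ ≤ 0) :
    P x = p := by
  have h2 := hvar (P x) (hP x).1
  have h3 := proj_var hC (hP x).1 (hP x).2 p hp
  have e1 : ⟪P x - p, P x - p⟫ = ⟪x - p, P x - p⟫ + ⟪x - P x, p - P x⟫ := by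
    have en : ⟪x - P x, p - P x⟫ = -⟪x - P x, P x - p⟫ := by
      rw [← inner_neg_right]; congr 1; abel
    rw [en, ← sub_eq_add_neg, ← inner_sub_left]
    congr 1; abel
  have key : ⟪P x - p, P x - p⟫ ≤ 0 := e1 ▸ add_nonpos h2 h3
  exact sub_eq_zero.mp (real_inner_self_nonpos.mp key)

/-- Cone characterization of the projection. -/
lemma proj_cone_eq {C : Set (EuclideanSpace ℝ (Fin d))} (hC : Convex ℝ C)
    {P : EuclideanSpace ℝ (Fin d) → EuclideanSpace ℝ (Fin d)}
    (hP : ∀ x, P x ∈ C ∧ ∀ w ∈ C, ‖x - P x‖ ≤ ‖x - w‖)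
    {x p : EuclideanSpace ℝ (Fin d)} (hp : p ∈ C)
    (horth : ⟪x - p, p⟫ = 0)
    (hpolar : ∀ w ∈ C, ⟪x - p, w⟫ ≤ 0) :
    P x = p := by
  refine proj_eq hC hP hp fun w hw => ?_
  rw [inner_sub_right, horth, sub_zero]
  exact hpolar w hw

/-- From the variational inequality on a cone get orthogonality and polarity. -/
lemma proj_cone_props {C : Set (EuclideanSpace ℝ (Fin d))} (hC : Convex ℝ C)
    (hcone : ∀ x ∈ C, ∀ t : ℝ, 0 < t → t • x ∈ C)
    {x p : EuclideanSpace ℝ (Fin d)} (hp : p ∈ C)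
    (hmin : ∀ w ∈ C, ‖x - p‖ ≤ ‖x - w‖) :
    ⟪x - p, p⟫ = 0 ∧ ∀ w ∈ C, ⟪x - p, w⟫ ≤ 0 := by
  have hvar := proj_var hC hp hmin
  have h2 := hvar ((2 : ℝ) • p) (hcone p hp 2 (by norm_num))
  have hh := hvar (((1 : ℝ)/2) • p) (hcone p hp (1/2) (by norm_num))
  have e2 : (2 : ℝ) • p - p = p := by module
  have eh : ((1 : ℝ)/2) • p - p = -(((1:ℝ)/2) • p) := by module
  rw [e2] at h2
  rw [eh, inner_neg_right, real_inner_smul_right] at hh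
  have horth : ⟪x - p, p⟫ = 0 := by linarith
  refine ⟨horth, fun w hw => ?_⟩
  have := hvar w hw
  rw [inner_sub_right, horth, sub_zero] at this
  exact this

end Helpers

/-- For closed convex cones `A, B ⊆ ℝ^d`, the kernel of the Douglas–Rachford operator
equals the cone generated by `((-B) ∩ A°) ∪ (B° ∩ A)`, i.e. the set of sums `u + v`
with `u ∈ (-B) ∩ A°` and `v ∈ B° ∩ A`. -/
theorem stmt2 {d : ℕ} (A B : Set (EuclideanSpace ℝ (Fin d)))
    (hAclosed : IsClosed A) (hAconv : Convex ℝ A)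
    (hBclosed : IsClosed B) (hBconv : Convex ℝ B)
    (hAcone : ∀ x ∈ A, ∀ t : ℝ, 0 < t → t • x ∈ A)
    (hBcone : ∀ x ∈ B, ∀ t : ℝ, 0 < t → t • x ∈ B)
    (PA PB T : EuclideanSpace ℝ (Fin d) → EuclideanSpace ℝ (Fin d))
    (hPA : ∀ x, PA x ∈ A ∧ ∀ w ∈ A, ‖x - PA x‖ ≤ ‖x - w‖)
    (hPB : ∀ x, PB x ∈ B ∧ ∀ w ∈ B, ‖x - PB x‖ ≤ ‖x - w‖)
    (hT : ∀ x, T x = (1 / 2 : ℝ) •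
      (x + ((2 : ℝ) • PB ((2 : ℝ) • PA x - x) - ((2 : ℝ) • PA x - x)))) :
    {x | T x = 0} =
      {x | ∃ u ∈ (-B) ∩ {y | ∀ w ∈ A, inner ℝ w y ≤ (0 : ℝ)},
        ∃ v ∈ {y | ∀ w ∈ B, inner ℝ w y ≤ (0 : ℝ)} ∩ A, x = u + v} := by
  ext x
  simp only [Set.mem_setOf_eq]
  constructor
  · intro h
    rw [hT x] at h
    -- derive PB (2 PA x - x) = PA x - x
    have key : (2 : ℝ) • (PB ((2 : ℝ) • PA x - x) - (PA x - x)) = 0 := by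
      linear_combination (norm := module) (2 : ℝ) • h
    have hproj : PB ((2 : ℝ) • PA x - x) = PA x - x := by
      have := (smul_eq_zero.mp key).resolve_left (by norm_num)
      exact sub_eq_zero.mp this
    set p := PA x with hpdef
    obtain ⟨hpA, hpmin⟩ := hPA x
    obtain ⟨horthA, hpolA⟩ := proj_cone_props hAconv hAcone hpA hpmin
    have hPBz := hPB ((2 : ℝ) • p - x)
    rw [hproj] at hPBz
    obtain ⟨hmemB, hminB⟩ := hPBz
    obtain ⟨horthB, hpolB⟩ := proj_cone_props hBconv hBcone hmemB hminB
    have hz : (2 : ℝ) • p - x - (p - x) = p := by module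
    rw [hz] at horthB hpolB
    refine ⟨x - p, ⟨?_, ?_⟩, p, ⟨?_, hpA⟩, by abel⟩
    · rw [Set.mem_neg, show -(x - p) = p - x by abel]
      exact hmemB
    · intro w hw
      rw [real_inner_comm]
      exact hpolA w hw
    · intro w hw
      rw [real_inner_comm]
      exact hpolB w hw
  · rintro ⟨u, ⟨huB, huA⟩, v, ⟨hvB, hvA⟩, rfl⟩
    rw [Set.mem_neg] at huB
    have h1 : inner ℝ v u ≤ (0 : ℝ) := huA v hvA
    have h2 : inner ℝ (-u) v ≤ (0 : ℝ) := hvB (-u) huB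
    rw [inner_neg_left, real_inner_comm] at h2
    have horth : inner ℝ v u = (0 : ℝ) := le_antisymm h1 (by linarith)
    have hPAx : PA (u + v) = v := by
      apply proj_cone_eq hAconv hPA hvA
      · rw [show u + v - v = u by abel, real_inner_comm]
        exact horth
      · intro w hw
        rw [show u + v - v = u by abel, real_inner_comm]
        exact huA w hw
    rw [hT (u + v), hPAx,
      show (2 : ℝ) • v - (u + v) = v - u by module]
    have hgoal : PB (v - u) = -u := by
      apply proj_cone_eq hBconv hPB huB
      · rw [show v - u - -u = v by abel, real_inner_comm]
        have : inner ℝ (-u) v = (0 : ℝ) := by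
          rw [inner_neg_left, real_inner_comm, horth, neg_zero]
        exact this
      · intro w hw
        rw [show v - u - -u = v by abel, real_inner_comm]
        exact hvB w hw
    rw [hgoal]
    module
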